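/- Let 0 < α < 1, β > 0, and let λ be a complex number not lying in the real interval (−∞, −β]. Then the (complex-valued) improper integral ∫_{−∞}^{+∞} |ϑ|^{2α−1} / (λ + β + ϑ²) dϑ converges and equals (π / sin(απ)) · (λ + β)^{α−1}, where (λ+β)^{α−1} denotes the principal branch of the complex power. -/

import Mathlib

open Real MeasureTheory Set Metric Filter

namespace Stmt0Aux

lemma lb {w : ℂ} (hw : w ∈ Complex.slitPlane) :
    ∃ c : ℝ, 0 < c ∧ ∀ t : ℝ, 0 ≤ t → c * (1 + t) ≤ ‖(t : ℂ) + w‖ := by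
  have hnorm : ∀ t : ℝ, 0 ≤ t → t - ‖w‖ ≤ ‖(t : ℂ) + w‖ := by
    intro t ht
    have h1 : ‖(t : ℂ)‖ ≤ ‖(t : ℂ) + w‖ + ‖w‖ := by
      calc ‖(t : ℂ)‖ = ‖(t : ℂ) + w + -w‖ := by ring_nf
        _ ≤ ‖(t : ℂ) + w‖ + ‖-w‖ := norm_add_le _ _
        _ = ‖(t : ℂ) + w‖ + ‖w‖ := by rw [norm_neg]
    have h2 : ‖(t : ℂ)‖ = t := by
      rw [Complex.norm_real, Real.norm_eq_abs, abs_of_nonneg ht]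
    linarith
  rcases hw with hre | him
  · refine ⟨min w.re 1, lt_min hre one_pos, fun t ht => ?_⟩
    have h1 : min w.re 1 * (1 + t) ≤ w.re + t := by
      have h2 := min_le_left w.re 1
      have h3 := min_le_right w.re 1
      nlinarith
    have h4 : w.re + t ≤ ‖(t : ℂ) + w‖ := by
      have h5 : ((t : ℂ) + w).re ≤ ‖(t : ℂ) + w‖ := Complex.re_le_norm _
      simp only [Complex.add_re, Complex.ofReal_re] at h5
      linarith
    linarith
  · have hd : 0 < |w.im| := abs_pos.mpr him
    have hW : 0 ≤ ‖w‖ := norm_nonneg w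
    have hc0 : 0 < min (|w.im| / (2 * (1 + ‖w‖))) 4⁻¹ :=
      lt_min (by positivity) (by norm_num)
    set c := min (|w.im| / (2 * (1 + ‖w‖))) 4⁻¹ with hc
    refine ⟨c, hc0, fun t ht => ?_⟩
    have hcle1 : c ≤ |w.im| / (2 * (1 + ‖w‖)) := min_le_left _ _
    have hcle2 : c ≤ 4⁻¹ := min_le_right _ _
    have him_le : |w.im| ≤ ‖(t : ℂ) + w‖ := by
      have h5 : |((t : ℂ) + w).im| ≤ ‖(t : ℂ) + w‖ := Complex.abs_im_le_norm _
      simpa using h5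
    rcases le_or_gt t (2 * ‖w‖ + 1) with h | h
    · have key : c * (2 * (1 + ‖w‖)) ≤ |w.im| := by
        calc c * (2 * (1 + ‖w‖)) ≤ |w.im| / (2 * (1 + ‖w‖)) * (2 * (1 + ‖w‖)) :=
              mul_le_mul_of_nonneg_right hcle1 (by positivity)
          _ = |w.im| := div_mul_cancel₀ _ (by positivity)
      have h6 : c * (1 + t) ≤ c * (2 * (1 + ‖w‖)) :=
        mul_le_mul_of_nonneg_left (by linarith) hc0.le
      linarith
    · have h5 := hnorm t ht
      have h6 : c * (1 + t) ≤ 4⁻¹ * (1 + t) :=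
        mul_le_mul_of_nonneg_right hcle2 (by linarith)
      nlinarith

lemma intg {s q : ℝ} (hs : -1 < s) (hq : s + 1 < q) :
    IntegrableOn (fun t : ℝ => t ^ s / (1 + t) ^ q) (Ioi (0 : ℝ)) := by
  have hq0 : 0 < q := by linarith
  have hcont : ContinuousOn (fun t : ℝ => t ^ s / (1 + t) ^ q) (Ioi (0 : ℝ)) := by
    intro t ht
    have ht0 : (0 : ℝ) < t := ht
    have h1 : (0 : ℝ) < 1 + t := by linarith
    have c1 : ContinuousAt (fun t : ℝ => t ^ s) t :=
      Real.continuousAt_rpow_const t s (Or.inl ht0.ne')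
    have c2 : ContinuousAt (fun t : ℝ => (1 + t) ^ q) t :=
      ContinuousAt.rpow_const (continuousAt_const.add continuousAt_id) (Or.inl h1.ne')
    exact (c1.div c2 (by positivity)).continuousWithinAt
  have hsplit : Ioc (0:ℝ) 1 ∪ Ioi (1:ℝ) = Ioi (0:ℝ) := Ioc_union_Ioi_eq_Ioi zero_le_one
  rw [← hsplit]
  apply IntegrableOn.union
  · have hg : IntegrableOn (fun t : ℝ => t ^ s) (Ioc (0:ℝ) 1) := by
      have := intervalIntegral.intervalIntegrable_rpow' (a := 0) (b := 1) hs
      rwa [intervalIntegrable_iff, uIoc_of_le zero_le_one] at this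
    apply hg.integrable.mono'
    · exact (hcont.mono (Ioc_subset_Ioi_self)).aestronglyMeasurable measurableSet_Ioc
    · rw [ae_restrict_iff' measurableSet_Ioc]
      refine ae_of_all _ fun t htt => ?_
      obtain ⟨ht0, ht1⟩ := htt
      have h1 : (1:ℝ) ≤ (1 + t) ^ q := Real.one_le_rpow (by linarith) hq0.le
      have h2 : 0 ≤ t ^ s := Real.rpow_nonneg ht0.le _
      rw [Real.norm_eq_abs, abs_of_nonneg (by positivity)]
      calc t ^ s / (1 + t) ^ q ≤ t ^ s / 1 := by
            exact div_le_div_of_nonneg_left h2 one_pos h1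
        _ = t ^ s := div_one _
  · have hg : IntegrableOn (fun t : ℝ => t ^ (s - q)) (Ioi (1:ℝ)) :=
      integrableOn_Ioi_rpow_of_lt (by linarith) one_pos
    apply hg.integrable.mono'
    · exact (hcont.mono (Ioi_subset_Ioi zero_le_one)).aestronglyMeasurable measurableSet_Ioi
    · rw [ae_restrict_iff' measurableSet_Ioi]
      refine ae_of_all _ fun t htt => ?_
      have ht1 : (1:ℝ) < t := htt
      have ht0 : (0:ℝ) < t := by linarith
      have h2 : 0 ≤ t ^ s := Real.rpow_nonneg ht0.le _
      have h3 : t ^ q ≤ (1 + t) ^ q := Real.rpow_le_rpow ht0.le (by linarith) hq0.le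
      have h4 : 0 < t ^ q := Real.rpow_pos_of_pos ht0 _
      rw [Real.norm_eq_abs, abs_of_nonneg (by positivity)]
      calc t ^ s / (1 + t) ^ q ≤ t ^ s / t ^ q := by
            apply div_le_div_of_nonneg_left h2 h4 h3  -- check
          _ = t ^ (s - q) := by rw [← Real.rpow_sub ht0]


lemma contF (a : ℝ) {w : ℂ} {c : ℝ} (hc : 0 < c)
    (hcb : ∀ t : ℝ, 0 ≤ t → c * (1 + t) ≤ ‖(t : ℂ) + w‖) :
    ContinuousOn (fun t : ℝ => ((t ^ (a - 1) : ℝ) : ℂ) / ((t : ℂ) + w)) (Ioi (0 : ℝ)) := by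
  have hne : ∀ t : ℝ, 0 ≤ t → (t : ℂ) + w ≠ 0 := by
    intro t ht h0
    have := hcb t ht
    rw [h0, norm_zero] at this
    nlinarith
  intro t ht
  have ht0 : (0 : ℝ) < t := ht
  have c1 : ContinuousAt (fun t : ℝ => ((t ^ (a - 1) : ℝ) : ℂ)) t :=
    Complex.continuous_ofReal.continuousAt.comp
      (Real.continuousAt_rpow_const t (a - 1) (Or.inl ht0.ne'))
  have c2 : ContinuousAt (fun t : ℝ => (t : ℂ) + w) t :=
    (Complex.continuous_ofReal.continuousAt).add continuousAt_const
  exact (c1.div c2 (hne t ht0.le)).continuousWithinAt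

lemma integrableF (a : ℝ) (ha0 : 0 < a) (ha1 : a < 1) {w : ℂ}
    (hw : w ∈ Complex.slitPlane) :
    IntegrableOn (fun t : ℝ => ((t ^ (a - 1) : ℝ) : ℂ) / ((t : ℂ) + w)) (Ioi (0 : ℝ)) := by
  obtain ⟨c, hc, hcb⟩ := lb hw
  have hg : IntegrableOn (fun t : ℝ => c⁻¹ * (t ^ (a - 1) / (1 + t) ^ (1 : ℝ)))
      (Ioi (0 : ℝ)) := (intg (by linarith) (by linarith)).const_mul _
  apply hg.integrable.mono'
  · exact (contF a hc hcb).aestronglyMeasurable measurableSet_Ioi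
  · rw [ae_restrict_iff' measurableSet_Ioi]
    refine ae_of_all _ fun t htt => ?_
    have ht0 : (0 : ℝ) < t := htt
    have hb := hcb t ht0.le
    have hpos : 0 < c * (1 + t) := by positivity
    have h2 : 0 ≤ t ^ (a - 1) := Real.rpow_nonneg ht0.le _
    rw [norm_div, Complex.norm_real, Real.norm_eq_abs, abs_of_nonneg h2]
    rw [Real.rpow_one]
    calc t ^ (a - 1) / ‖(t : ℂ) + w‖ ≤ t ^ (a - 1) / (c * (1 + t)) :=
          div_le_div_of_nonneg_left h2 hpos hb
      _ = c⁻¹ * (t ^ (a - 1) / (1 + t)) := by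
          field_simp

lemma valueOne (a : ℝ) (ha0 : 0 < a) (ha1 : a < 1) :
    ∫ t in Ioi (0 : ℝ), ((t ^ (a - 1) : ℝ) : ℂ) / ((t : ℂ) + 1)
      = ((π / Real.sin (a * π) : ℝ) : ℂ) := by
  set g : ℝ → ℂ := fun t => ((t ^ (a - 1) : ℝ) : ℂ) / ((t : ℂ) + 1) with hgdef
  have hderiv : ∀ u ∈ Ioo (0 : ℝ) 1, HasDerivWithinAt (fun u : ℝ => u / (1 - u))
      (((1 - u) ^ 2)⁻¹) (Ioo 0 1) u := by
    intro u hu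
    have h1 : (1 : ℝ) - u ≠ 0 := sub_ne_zero.mpr (ne_of_gt hu.2)
    have hd : HasDerivAt (fun u : ℝ => u / (1 - u))
        ((1 * (1 - u) - u * (0 - 1)) / (1 - u) ^ 2) u :=
      (hasDerivAt_id u).div ((hasDerivAt_const u 1).sub (hasDerivAt_id u)) h1
    have : (1 * (1 - u) - u * (0 - 1)) / (1 - u) ^ 2 = ((1 - u) ^ 2)⁻¹ := by
      field_simp
      ring
    rw [this] at hd
    exact hd.hasDerivWithinAt
  have hinj : InjOn (fun u : ℝ => u / (1 - u)) (Ioo 0 1) := by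
    intro u hu v hv h
    have h1 : (1 : ℝ) - u ≠ 0 := sub_ne_zero.mpr (ne_of_gt hu.2)
    have h2 : (1 : ℝ) - v ≠ 0 := sub_ne_zero.mpr (ne_of_gt hv.2)
    field_simp at h
    linarith
  have himg : (fun u : ℝ => u / (1 - u)) '' Ioo 0 1 = Ioi 0 := by
    ext y
    simp only [mem_image, mem_Ioi, mem_Ioo]
    constructor
    · rintro ⟨u, ⟨hu0, hu1⟩, rfl⟩
      exact div_pos hu0 (by linarith)
    · intro hy
      refine ⟨y / (1 + y), ⟨by positivity, ?_⟩, ?_⟩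
      · rw [div_lt_one (by linarith)]; linarith
      · field_simp; ring
  have hchg := integral_image_eq_integral_abs_deriv_smul measurableSet_Ioo hderiv hinj g
  rw [himg] at hchg
  rw [hchg]
  have heq : ∀ u ∈ Ioo (0 : ℝ) 1,
      |(((1 - u) ^ 2)⁻¹)| • g (u / (1 - u))
        = (u : ℂ) ^ ((a : ℂ) - 1) * ((1 : ℂ) - u) ^ ((1 - (a : ℂ)) - 1) := by
    intro u hu
    obtain ⟨hu0, hu1⟩ := hu
    have h1u : (0 : ℝ) < 1 - u := by linarith
    have hx0 : (0 : ℝ) ≤ u / (1 - u) := by positivity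
    have ec1 : ((u / (1 - u) : ℝ) : ℂ) + 1 = (((u / (1 - u) + 1 : ℝ)) : ℂ) := by push_cast; ring
    have ereal : |(((1 - u) ^ 2)⁻¹)| * ((u / (1 - u)) ^ (a - 1) / (u / (1 - u) + 1))
        = u ^ (a - 1) * (1 - u) ^ (-a) := by
      rw [abs_of_pos (by positivity)]
      rw [Real.div_rpow hu0.le h1u.le]
      have hx1 : u / (1 - u) + 1 = (1 - u)⁻¹ := by field_simp; ring
      rw [hx1]
      have hA : (1 - u) ^ (-a) = ((1 - u) ^ a)⁻¹ := Real.rpow_neg h1u.le a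
      have hB : (1 - u) ^ (a - 1) * (1 - u) = (1 - u) ^ a := by
        nth_rewrite 2 [← Real.rpow_one (1 - u)]
        rw [← Real.rpow_add h1u]
        norm_num
      rw [hA]
      have hne1 : (1 - u) ^ (a - 1) ≠ 0 := (Real.rpow_pos_of_pos h1u _).ne'
      have hne2 : (1 - u) ^ a ≠ 0 := (Real.rpow_pos_of_pos h1u _).ne'
      field_simp
      rw [← hB]; ring
    calc |(((1 - u) ^ 2)⁻¹)| • g (u / (1 - u))
        = ((|(((1 - u) ^ 2)⁻¹)| * ((u / (1 - u)) ^ (a - 1) / (u / (1 - u) + 1)) : ℝ) : ℂ) := by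
          rw [hgdef]
          simp only [ec1, Complex.real_smul]
          push_cast
          ring
      _ = ((u ^ (a - 1) * (1 - u) ^ (-a) : ℝ) : ℂ) := by rw [ereal]
      _ = (u : ℂ) ^ ((a : ℂ) - 1) * ((1 : ℂ) - u) ^ ((1 - (a : ℂ)) - 1) := by
          rw [Complex.ofReal_mul, Complex.ofReal_cpow hu0.le, Complex.ofReal_cpow h1u.le]
          push_cast
          norm_num
  rw [setIntegral_congr_fun measurableSet_Ioo heq]
  have hIoo : ∫ u in Ioo (0 : ℝ) 1, (u : ℂ) ^ ((a : ℂ) - 1) * ((1 : ℂ) - u) ^ ((1 - (a : ℂ)) - 1)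
      = Complex.betaIntegral a (1 - a) := by
    rw [Complex.betaIntegral, intervalIntegral.integral_of_le zero_le_one,
      integral_Ioc_eq_integral_Ioo]
  rw [hIoo]
  have h1 := Complex.Gamma_mul_Gamma_eq_betaIntegral (s := (a : ℂ)) (t := 1 - a)
      (by simpa using ha0) (by simp; norm_num [ha1]) 
  have h2 : (a : ℂ) + (1 - a) = 1 := by ring
  rw [h2, Complex.Gamma_one, one_mul] at h1
  rw [← h1, Complex.Gamma_mul_Gamma_one_sub]
  rw [Complex.ofReal_div, Complex.ofReal_sin]
  push_cast
  rw [mul_comm (π : ℂ) (a : ℂ)]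

lemma scaling (a : ℝ) (ha0 : 0 < a) (ha1 : a < 1) {x : ℝ} (hx : 0 < x) :
    ∫ t in Ioi (0 : ℝ), ((t ^ (a - 1) : ℝ) : ℂ) / ((t : ℂ) + x)
      = ((x ^ (a - 1) : ℝ) : ℂ) * ∫ t in Ioi (0 : ℝ), ((t ^ (a - 1) : ℝ) : ℂ) / ((t : ℂ) + 1) := by
  have h := integral_comp_mul_left_Ioi
    (fun t : ℝ => ((t ^ (a - 1) : ℝ) : ℂ) / ((t : ℂ) + x)) 0 hx
  rw [mul_zero] at h
  have hxC : (x : ℂ) ≠ 0 := Complex.ofReal_ne_zero.mpr hx.ne'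
  have heq : ∀ s ∈ Ioi (0 : ℝ),
      (((x * s) ^ (a - 1) : ℝ) : ℂ) / (((x * s : ℝ) : ℂ) + x)
        = ((x ^ (a - 1) : ℝ) : ℂ) * (x : ℂ)⁻¹ * (((s ^ (a - 1) : ℝ) : ℂ) / ((s : ℂ) + 1)) := by
    intro s hs
    have hs0 : (0 : ℝ) < s := hs
    have hsne : (s : ℂ) + 1 ≠ 0 := by
      intro hcon
      have := congrArg Complex.re hcon
      simp at this
      linarith
    rw [Real.mul_rpow hx.le hs0.le]
    have hne3 : (x : ℂ) * s + x ≠ 0 := by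
      rw [show ((x : ℂ) * s + x) = (x : ℂ) * ((s : ℂ) + 1) by ring]
      exact mul_ne_zero hxC hsne
    push_cast
    rw [show ((x : ℂ) * s + x) = (x : ℂ) * ((s : ℂ) + 1) by ring]
    field_simp
  rw [setIntegral_congr_fun measurableSet_Ioi heq] at h
  rw [MeasureTheory.integral_const_mul, Complex.real_smul, Complex.ofReal_inv] at h
  field_simp at h
  rw [h]

lemma diffF (a : ℝ) (ha0 : 0 < a) (ha1 : a < 1) {w : ℂ} (hw : w ∈ Complex.slitPlane) :
    DifferentiableAt ℂ
      (fun z : ℂ => ∫ t in Ioi (0 : ℝ), ((t ^ (a - 1) : ℝ) : ℂ) / ((t : ℂ) + z)) w := by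
  obtain ⟨c, hc, hcb⟩ := lb hw
  have hball : ∀ z ∈ ball w (c / 2), ∀ t : ℝ, 0 ≤ t →
      c / 2 * (1 + t) ≤ ‖(t : ℂ) + z‖ := by
    intro z hz t ht
    have h1 : ‖z - w‖ < c / 2 := by
      rw [mem_ball, dist_eq_norm] at hz; exact hz
    have h2 : ‖(t : ℂ) + w‖ ≤ ‖(t : ℂ) + z‖ + ‖z - w‖ := by
      calc ‖(t : ℂ) + w‖ = ‖((t : ℂ) + z) - (z - w)‖ := by ring_nf
        _ ≤ ‖(t : ℂ) + z‖ + ‖z - w‖ := norm_sub_le _ _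
    have h3 := hcb t ht
    have h4 : c / 2 ≤ c / 2 * (1 + t) := by nlinarith
    nlinarith
  have hne : ∀ z ∈ ball w (c / 2), ∀ t : ℝ, 0 < t → (t : ℂ) + z ≠ 0 := by
    intro z hz t ht h0
    have := hball z hz t ht.le
    rw [h0, norm_zero] at this
    nlinarith
  set F' : ℂ → ℝ → ℂ := fun z t => -(((t ^ (a - 1) : ℝ) : ℂ) / ((t : ℂ) + z) ^ 2) with hF'
  have main := hasDerivAt_integral_of_dominated_loc_of_deriv_le
    (F := fun z (t : ℝ) => ((t ^ (a - 1) : ℝ) : ℂ) / ((t : ℂ) + z)) (F' := F')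
    (x₀ := w) (μ := volume.restrict (Ioi (0 : ℝ)))
    (bound := fun t => 4 / c ^ 2 * (t ^ (a - 1) / (1 + t) ^ (2 : ℝ)))
    (Metric.ball_mem_nhds w (show (0 : ℝ) < c / 2 by positivity)) ?_ ?_ ?_ ?_ ?_ ?_
  · exact main.2.differentiableAt
  · -- measurability near w
    refine eventually_of_mem (Metric.ball_mem_nhds w (by positivity : (0:ℝ) < c / 2))
      fun z hz => ?_
    exact ((contF a (by positivity : (0:ℝ) < c/2) (hball z hz)).aestronglyMeasurable
      measurableSet_Ioi)
  · exact integrableF a ha0 ha1 hw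
  · -- measurability of F' w
    apply ContinuousOn.aestronglyMeasurable _ measurableSet_Ioi
    intro t htt
    have ht0 : (0 : ℝ) < t := htt
    have c1 : ContinuousAt (fun t : ℝ => ((t ^ (a - 1) : ℝ) : ℂ)) t :=
      Complex.continuous_ofReal.continuousAt.comp
        (Real.continuousAt_rpow_const t (a - 1) (Or.inl ht0.ne'))
    have c2 : ContinuousAt (fun t : ℝ => ((t : ℂ) + w) ^ 2) t :=
      (((Complex.continuous_ofReal.continuousAt).add continuousAt_const).pow 2)
    have hne2 : ((t : ℂ) + w) ^ 2 ≠ 0 :=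
      pow_ne_zero 2 (hne w (mem_ball_self (by positivity)) t ht0)
    exact ((c1.div c2 hne2).neg).continuousWithinAt
  · -- bound
    rw [ae_restrict_iff' measurableSet_Ioi]
    refine ae_of_all _ fun t htt z hz => ?_
    have ht0 : (0 : ℝ) < t := htt
    have hb := hball z hz t ht0.le
    have hpos : (0 : ℝ) < c / 2 * (1 + t) := by positivity
    have h2 : 0 ≤ t ^ (a - 1) := Real.rpow_nonneg ht0.le _
    rw [hF']
    rw [norm_neg, norm_div, Complex.norm_real, Real.norm_eq_abs, abs_of_nonneg h2,
      norm_pow]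
    have h5 : (c / 2 * (1 + t)) ^ 2 ≤ ‖(t : ℂ) + z‖ ^ 2 := by
      apply pow_le_pow_left₀ hpos.le hb
    calc t ^ (a - 1) / ‖(t : ℂ) + z‖ ^ 2 ≤ t ^ (a - 1) / (c / 2 * (1 + t)) ^ 2 :=
          div_le_div_of_nonneg_left h2 (by positivity) h5
      _ = 4 / c ^ 2 * (t ^ (a - 1) / (1 + t) ^ (2 : ℝ)) := by
          rw [Real.rpow_two]
          field_simp
          ring
  · exact (intg (by linarith : (-1:ℝ) < a - 1) (by linarith : a - 1 + 1 < 2)).const_mul _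
  · -- derivative
    rw [ae_restrict_iff' measurableSet_Ioi]
    refine ae_of_all _ fun t htt z hz => ?_
    have ht0 : (0 : ℝ) < t := htt
    have hne2 : (t : ℂ) + z ≠ 0 := hne z hz t ht0
    have hd : HasDerivAt (fun z : ℂ => ((t ^ (a - 1) : ℝ) : ℂ) / ((t : ℂ) + z))
        ((0 * ((t : ℂ) + z) - ((t ^ (a - 1) : ℝ) : ℂ) * (0 + 1)) / ((t : ℂ) + z) ^ 2) z :=
      (hasDerivAt_const z _).div ((hasDerivAt_const z ((t : ℂ))).add (hasDerivAt_id z)) hne2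
    have : (0 * ((t : ℂ) + z) - ((t ^ (a - 1) : ℝ) : ℂ) * (0 + 1)) / ((t : ℂ) + z) ^ 2
        = F' z t := by
      rw [hF']
      ring
    rwa [this] at hd

lemma slitPlane_preconnected : IsPreconnected Complex.slitPlane := by
  apply isPreconnected_of_forall (1 : ℂ)
  intro y hy
  exact ⟨segment ℝ 1 y, (Complex.starConvex_one_slitPlane.segment_subset hy),
    left_mem_segment ℝ 1 y, right_mem_segment ℝ 1 y,
    (convex_segment 1 y).isPreconnected⟩

lemma key (a : ℝ) (ha0 : 0 < a) (ha1 : a < 1) {w : ℂ} (hw : w ∈ Complex.slitPlane) :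
    ∫ t in Ioi (0 : ℝ), ((t ^ (a - 1) : ℝ) : ℂ) / ((t : ℂ) + w)
      = ((π / Real.sin (a * π) : ℝ) : ℂ) * w ^ ((a : ℂ) - 1) := by
  set F : ℂ → ℂ := fun z => ∫ t in Ioi (0 : ℝ), ((t ^ (a - 1) : ℝ) : ℂ) / ((t : ℂ) + z)
    with hFdef
  set G : ℂ → ℂ := fun z => ((π / Real.sin (a * π) : ℝ) : ℂ) * z ^ ((a : ℂ) - 1) with hGdef
  have hFan : AnalyticOnNhd ℂ F Complex.slitPlane := by
    apply DifferentiableOn.analyticOnNhd _ Complex.isOpen_slitPlane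
    exact fun z hz => (diffF a ha0 ha1 hz).differentiableWithinAt
  have hGan : AnalyticOnNhd ℂ G Complex.slitPlane := by
    apply DifferentiableOn.analyticOnNhd _ Complex.isOpen_slitPlane
    intro z hz
    exact ((differentiableAt_id.cpow (differentiableAt_const _) hz).const_mul
      _).differentiableWithinAt
  have hreal : ∀ x : ℝ, 0 < x → F x = G x := by
    intro x hx
    rw [hFdef, hGdef]
    simp only
    rw [scaling a ha0 ha1 hx, valueOne a ha0 ha1,
      show ((a : ℂ) - 1) = ((a - 1 : ℝ) : ℂ) by push_cast; ring,
      ← Complex.ofReal_cpow hx.le]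
    push_cast
    ring
  have htend : Tendsto (fun n : ℕ => ((1 + ((n : ℝ) + 1)⁻¹ : ℝ) : ℂ)) atTop
      (nhdsWithin 1 {(1 : ℂ)}ᶜ) := by
    rw [tendsto_nhdsWithin_iff]
    constructor
    · have h1 : Tendsto (fun n : ℕ => (1 + ((n : ℝ) + 1)⁻¹ : ℝ)) atTop (nhds 1) := by
        have h2 : Tendsto (fun n : ℕ => ((n : ℝ) + 1)⁻¹) atTop (nhds 0) :=
          tendsto_one_div_add_atTop_nhds_zero_nat.congr (by intro n; rw [one_div])
        simpa using tendsto_const_nhds.add h2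
      have := (Complex.continuous_ofReal.tendsto 1).comp h1
      simpa [Function.comp_def] using this
    · refine Eventually.of_forall fun n => ?_
      simp only [mem_compl_iff, mem_singleton_iff]
      intro hcon
      rw [show (1 : ℂ) = ((1 : ℝ) : ℂ) by norm_num] at hcon
      have := Complex.ofReal_injective hcon
      have hpos : (0 : ℝ) < ((n : ℝ) + 1)⁻¹ := by positivity
      linarith
  have hfreq : ∃ᶠ z in nhdsWithin 1 {(1 : ℂ)}ᶜ, F z = G z :=
    htend.frequently (Frequently.of_forall fun n => hreal _ (by positivity))
  exact hFan.eqOn_of_preconnected_of_frequently_eq hGan slitPlane_preconnected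
    Complex.one_mem_slitPlane hfreq hw

end Stmt0Aux

open Stmt0Aux

/-- Lemma 2.4 of the paper (complex parameter): for `0 < α < 1`, `β > 0` and a
complex `λ` not lying in the real interval `(-∞, -β]`, the improper integral
`∫ |ϑ|^(2α-1) / (λ + β + ϑ²) dϑ` converges and equals
`(π / sin(απ)) · (λ + β)^(α-1)` (principal branch). -/
theorem stmt_0 (α β : ℝ) (hα0 : 0 < α) (hα1 : α < 1) (hβ : 0 < β)
    (lam : ℂ) (hlam : ∀ x : ℝ, x ≤ -β → (x : ℂ) ≠ lam) :
    Integrable (fun ϑ : ℝ => ((|ϑ| ^ (2 * α - 1) : ℝ) : ℂ) / (lam + (β : ℂ) + (ϑ : ℂ) ^ 2)) ∧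
    ∫ ϑ : ℝ, ((|ϑ| ^ (2 * α - 1) : ℝ) : ℂ) / (lam + (β : ℂ) + (ϑ : ℂ) ^ 2)
      = ((π / Real.sin (α * π) : ℝ) : ℂ) * (lam + (β : ℂ)) ^ ((α : ℂ) - 1) := by
  set w : ℂ := lam + (β : ℂ) with hwdef
  have hw : w ∈ Complex.slitPlane := by
    by_contra hcon
    rw [Complex.mem_slitPlane_iff] at hcon
    push_neg at hcon
    obtain ⟨h1, h2⟩ := hcon
    have hweq : w = ((w.re : ℝ) : ℂ) := by
      apply Complex.ext <;> simp [h2]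
    have hlameq : ((w.re - β : ℝ) : ℂ) = lam := by
      push_cast
      rw [← hweq, hwdef]
      ring
    exact hlam (w.re - β) (by linarith) hlameq
  obtain ⟨c, hc, hcb⟩ := lb hw
  set h : ℝ → ℂ := fun θ => ((|θ| ^ (2 * α - 1) : ℝ) : ℂ) / (w + (θ : ℂ) ^ 2) with hhdef
  have heven : ∀ θ : ℝ, h (-θ) = h θ := by
    intro θ
    simp only [hhdef]
    rw [abs_neg]
    push_cast
    ring_nf
  have hlow : ∀ θ : ℝ, c * (1 + θ ^ 2) ≤ ‖w + (θ : ℂ) ^ 2‖ := by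
    intro θ
    have := hcb (θ ^ 2) (sq_nonneg θ)
    have he : ((θ ^ 2 : ℝ) : ℂ) + w = w + (θ : ℂ) ^ 2 := by push_cast; ring
    rwa [he] at this
  have hne : ∀ θ : ℝ, w + (θ : ℂ) ^ 2 ≠ 0 := by
    intro θ h0
    have := hlow θ
    rw [h0, norm_zero] at this
    nlinarith [sq_nonneg θ]
  have hcontIoi : ContinuousOn h (Ioi (0 : ℝ)) := by
    intro θ hθ
    have hθ0 : (0 : ℝ) < θ := hθ
    have c1 : ContinuousAt (fun θ : ℝ => ((|θ| ^ (2 * α - 1) : ℝ) : ℂ)) θ := by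
      apply Complex.continuous_ofReal.continuousAt.comp
      apply ContinuousAt.rpow_const continuous_abs.continuousAt
      exact Or.inl (abs_ne_zero.mpr hθ0.ne')
    have c2 : ContinuousAt (fun θ : ℝ => w + (θ : ℂ) ^ 2) θ :=
      continuousAt_const.add ((Complex.continuous_ofReal.continuousAt).pow 2)
    exact (c1.div c2 (hne θ)).continuousWithinAt
  have hIoi : IntegrableOn h (Ioi (0 : ℝ)) := by
    have hg : IntegrableOn (fun t : ℝ => 2 / c * (t ^ (2 * α - 1) / (1 + t) ^ (2 : ℝ)))
        (Ioi (0 : ℝ)) := (intg (by linarith) (by linarith)).const_mul _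
    apply hg.integrable.mono'
    · exact hcontIoi.aestronglyMeasurable measurableSet_Ioi
    · rw [ae_restrict_iff' measurableSet_Ioi]
      refine ae_of_all _ fun θ hθ => ?_
      have hθ0 : (0 : ℝ) < θ := hθ
      have hb := hlow θ
      have h2 : 0 ≤ |θ| ^ (2 * α - 1) := Real.rpow_nonneg (abs_nonneg θ) _
      rw [hhdef]
      simp only
      rw [norm_div, Complex.norm_real, Real.norm_eq_abs, abs_of_nonneg h2,
        abs_of_pos hθ0]
      have hsq : c / 2 * (1 + θ) ^ 2 ≤ c * (1 + θ ^ 2) := by nlinarith [sq_nonneg (1 - θ), hc.le]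
      have hpos2 : (0 : ℝ) < c / 2 * (1 + θ) ^ 2 := by positivity
      calc θ ^ (2 * α - 1) / ‖w + (θ : ℂ) ^ 2‖
          ≤ θ ^ (2 * α - 1) / (c / 2 * (1 + θ) ^ 2) :=
            div_le_div_of_nonneg_left (Real.rpow_nonneg hθ0.le _) hpos2 (by linarith)
        _ = 2 / c * (θ ^ (2 * α - 1) / (1 + θ) ^ (2 : ℝ)) := by
            rw [Real.rpow_two]
            field_simp
  have hIci : IntegrableOn h (Ici (0 : ℝ)) := Iff.mpr integrableOn_Ici_iff_integrableOn_Ioi hIoi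
  have hIic : IntegrableOn h (Iic (0 : ℝ)) := by
    have m : MeasurableEmbedding fun x : ℝ => -x :=
      (Homeomorph.neg ℝ).measurableEmbedding
    rw [show (volume : Measure ℝ) = Measure.map (fun x : ℝ => -x) volume from
      (Measure.map_neg_eq_self (volume : Measure ℝ)).symm]
    rw [m.integrableOn_map_iff]
    have : (fun x : ℝ => h (-x)) = h := funext heven
    simp only [Function.comp_def, neg_preimage, neg_Iic, neg_zero]
    rw [this]
    exact hIci
  have hInt : Integrable h := by
    rw [← integrableOn_univ, ← Set.Iic_union_Ioi (a := (0 : ℝ))]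
    exact hIic.union hIoi
  refine ⟨hInt, ?_⟩
  have hsplit : ∫ θ, h θ = (∫ θ in Iic (0 : ℝ), h θ) + ∫ θ in Ioi (0 : ℝ), h θ := by
    rw [← setIntegral_univ, ← Set.Iic_union_Ioi (a := (0 : ℝ)),
      setIntegral_union (Iic_disjoint_Ioi le_rfl) measurableSet_Ioi hIic hIoi]
  have hIic_eq : ∫ θ in Iic (0 : ℝ), h θ = ∫ θ in Ioi (0 : ℝ), h θ := by
    have hneg := integral_comp_neg_Iic (0 : ℝ) h
    rw [neg_zero] at hneg
    rw [← hneg]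
    exact setIntegral_congr_fun measurableSet_Iic fun x _ => (heven x).symm
  set g : ℝ → ℂ := fun t => (2 : ℝ)⁻¹ • (((t ^ (α - 1) : ℝ) : ℂ) / ((t : ℂ) + w)) with hgdef
  have hcv := integral_comp_rpow_Ioi_of_pos (g := g) (p := 2) two_pos
  have hcongr : ∀ x ∈ Ioi (0 : ℝ), ((2 : ℝ) * x ^ ((2 : ℝ) - 1)) • g (x ^ (2 : ℝ)) = h x := by
    intro x hx
    have hx0 : (0 : ℝ) < x := hx
    have e1 : x ^ ((2 : ℝ) - 1) = x := by norm_num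
    have e2 : x ^ (2 : ℝ) = x ^ 2 := by
      rw [show (2 : ℝ) = ((2 : ℕ) : ℝ) by norm_num, Real.rpow_natCast]
    have e3 : (x ^ 2) ^ (α - 1) = x ^ (2 * (α - 1)) := by
      rw [← Real.rpow_natCast x 2, ← Real.rpow_mul hx0.le]
      norm_num
    have e4 : x * x ^ (2 * (α - 1)) = x ^ (2 * α - 1) := by
      nth_rewrite 1 [← Real.rpow_one x]
      rw [← Real.rpow_add hx0]
      ring_nf
    rw [hgdef, hhdef]
    simp only
    rw [e1, e2, e3, smul_smul, abs_of_pos hx0]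
    rw [show (2 : ℝ) * x * (2 : ℝ)⁻¹ = x by ring]
    have hd1 : ((x ^ 2 : ℝ) : ℂ) + w ≠ 0 := by
      rw [show ((x ^ 2 : ℝ) : ℂ) + w = w + (x : ℂ) ^ 2 by push_cast; ring]
      exact hne x
    have hd2 : w + (x : ℂ) ^ 2 ≠ 0 := hne x
    rw [Complex.real_smul, ← mul_div_assoc, div_eq_div_iff hd1 hd2]
    push_cast [← e4]
    ring
  have hIoi_eq : ∫ θ in Ioi (0 : ℝ), h θ
      = (2 : ℝ)⁻¹ • (((π / Real.sin (α * π) : ℝ) : ℂ) * w ^ ((α : ℂ) - 1)) := by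
    rw [← setIntegral_congr_fun measurableSet_Ioi hcongr, hcv, hgdef]
    rw [integral_smul, key α hα0 hα1 hw]
  rw [hsplit, hIic_eq, hIoi_eq, ← add_smul]
  norm_num
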